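/- The enhanced power graph of the alternating group A₅ is a perfect graph, although A₅ has no unique Sylow subgroup. -/

import Mathlib

def powerGraph (G : Type*) [Group G] : SimpleGraph G where
  Adj x y := x ≠ y ∧ ((∃ n : ℤ, n ≠ 0 ∧ y = x ^ n) ∨ ∃ n : ℤ, n ≠ 0 ∧ x = y ^ n)
  symm := ⟨fun _ _ ⟨h, h2⟩ => ⟨h.symm, h2.symm⟩⟩
  loopless := ⟨fun _ ⟨h, _⟩ => h rfl⟩

def enhancedPowerGraph (G : Type*) [Group G] : SimpleGraph G where
  Adj x y := x ≠ y ∧ ∃ z : G, x ∈ Subgroup.zpowers z ∧ y ∈ Subgroup.zpowers z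
  symm := ⟨fun _ _ ⟨h, z, hx, hy⟩ => ⟨h.symm, z, hy, hx⟩⟩
  loopless := ⟨fun _ ⟨h, _⟩ => h rfl⟩


def SimpleGraph.IsPerfect {V : Type*} (G : SimpleGraph V) : Prop :=
  ∀ s : Set V, (G.induce s).chromaticNumber = ((G.induce s).cliqueNum : ℕ∞)

/-! ### Auxiliary lemmas -/

set_option maxHeartbeats 4000000 in
set_option maxRecDepth 10000 in
lemma A5_pow_orders : ∀ x : alternatingGroup (Fin 5), x ^ 2 = 1 ∨ x ^ 3 = 1 ∨ x ^ 5 = 1 := by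
  decide

lemma A5_orderOf_prime {x : alternatingGroup (Fin 5)} (hx : x ≠ 1) : (orderOf x).Prime := by
  have key : ∀ p : ℕ, p.Prime → x ^ p = 1 → (orderOf x).Prime := by
    intro p hp hpow
    have hd := orderOf_dvd_of_pow_eq_one hpow
    rcases (Nat.Prime.eq_one_or_self_of_dvd hp _ hd) with h | h
    · exact absurd (orderOf_eq_one_iff.mp h) hx
    · rwa [h]
  rcases A5_pow_orders x with h | h | h
  · exact key 2 Nat.prime_two h
  · exact key 3 Nat.prime_three h
  · exact key 5 (by norm_num) h

lemma A5_zpowers_eq {x z : alternatingGroup (Fin 5)} (hx : x ≠ 1)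
    (hmem : x ∈ Subgroup.zpowers z) : Subgroup.zpowers x = Subgroup.zpowers z := by
  have hz : z ≠ 1 := by
    rintro rfl
    rw [Subgroup.zpowers_one_eq_bot, Subgroup.mem_bot] at hmem
    exact hx hmem
  have hle : Subgroup.zpowers x ≤ Subgroup.zpowers z := Subgroup.zpowers_le.mpr hmem
  have hdvd : orderOf x ∣ orderOf z := by
    rw [← Nat.card_zpowers, ← Nat.card_zpowers]
    exact Subgroup.card_dvd_of_le hle
  have hcard : orderOf x = orderOf z := by
    rcases (Nat.Prime.eq_one_or_self_of_dvd (A5_orderOf_prime hz) _ hdvd) with h | h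
    · exact absurd h (A5_orderOf_prime hx).ne_one
    · exact h
  exact Subgroup.eq_of_le_of_card_ge hle
    (by rw [Nat.card_zpowers, Nat.card_zpowers, hcard])

lemma A5_adj_iff (a b : alternatingGroup (Fin 5)) :
    (enhancedPowerGraph (alternatingGroup (Fin 5))).Adj a b ↔
      a ≠ b ∧ (a = 1 ∨ b = 1 ∨ Subgroup.zpowers a = Subgroup.zpowers b) := by
  constructor
  · rintro ⟨hne, z, hx, hy⟩
    refine ⟨hne, ?_⟩
    by_cases ha : a = 1
    · exact Or.inl ha
    by_cases hb : b = 1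
    · exact Or.inr (Or.inl hb)
    · exact Or.inr (Or.inr ((A5_zpowers_eq ha hx).trans (A5_zpowers_eq hb hy).symm))
  · rintro ⟨hne, h | h | h⟩
    · exact ⟨hne, b, h ▸ Subgroup.one_mem _, Subgroup.mem_zpowers b⟩
    · exact ⟨hne, a, Subgroup.mem_zpowers a, h ▸ Subgroup.one_mem _⟩
    · exact ⟨hne, a, Subgroup.mem_zpowers a, h ▸ Subgroup.mem_zpowers b⟩

open Finset in
/-- A graph whose adjacency is "equal classes, or touching a unique apex" is perfectly
colorable: its chromatic number equals its clique number. -/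
lemma perfect_aux {W α : Type*} [Fintype W] (H : SimpleGraph W)
    (A : W → Prop) (c : W → α)
    (hA : ∀ x y, A x → A y → x = y)
    (hadj : ∀ x y, H.Adj x y ↔ x ≠ y ∧ (A x ∨ A y ∨ c x = c y)) :
    H.chromaticNumber = (H.cliqueNum : ℕ∞) := by
  classical
  letI : LinearOrder W := LinearOrder.lift' (Fintype.equivFin W) (Fintype.equivFin W).injective
  set k := H.cliqueNum with hk
  set e : ℕ := if ∃ y : W, A y then 1 else 0 with he
  set rank : W → ℕ := fun x => #(univ.filter fun y => ¬ A y ∧ c y = c x ∧ y < x) with hrank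
  set C : W → ℕ := fun x => if A x then 0 else rank x + e with hC
  -- the clique bound
  have hclique : ∀ x : W, ¬ A x → rank x + 1 + e ≤ k := by
    intro x hx
    set T₀ : Finset W := univ.filter (fun y => ¬ A y ∧ c y = c x ∧ y ≤ x) with hT0
    have hT0card : T₀.card = rank x + 1 := by
      have hins : T₀ = insert x (univ.filter fun y => ¬ A y ∧ c y = c x ∧ y < x) := by
        ext y
        simp only [hT0, mem_insert, mem_filter, mem_univ, true_and]
        constructor
        · rintro ⟨h1, h2, h3⟩
          rcases h3.lt_or_eq with h | h
          · exact Or.inr ⟨h1, h2, h⟩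
          · exact Or.inl h
        · rintro (rfl | ⟨h1, h2, h3⟩)
          · exact ⟨hx, rfl, le_rfl⟩
          · exact ⟨h1, h2, h3.le⟩
      rw [hins, card_insert_of_notMem (by simp)]
    have hT0clique : H.IsClique (T₀ : Set W) := by
      intro y hy z hz hyz
      simp only [hT0, coe_filter, Set.mem_setOf_eq, mem_univ, true_and] at hy hz
      exact (hadj y z).mpr ⟨hyz, Or.inr (Or.inr (hy.2.1.trans hz.2.1.symm))⟩
    by_cases hex : ∃ y : W, A y
    · obtain ⟨a, ha⟩ := hex
      have haT : a ∉ T₀ := by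
        simp only [hT0, mem_filter, mem_univ, true_and]
        rintro ⟨h, -⟩; exact h ha
      have hclq : H.IsClique ((insert a T₀ : Finset W) : Set W) := by
        rw [coe_insert]
        intro y hy z hz hyz
        rcases hy with rfl | hy <;> rcases hz with rfl | hz
        · exact absurd rfl hyz
        · exact (hadj y z).mpr ⟨hyz, Or.inl ha⟩
        · exact (hadj y z).mpr ⟨hyz, Or.inr (Or.inl ha)⟩
        · exact hT0clique hy hz hyz
      have hcard : (insert a T₀).card = rank x + 1 + 1 := by
        rw [card_insert_of_notMem haT, hT0card]
      have := SimpleGraph.IsClique.card_le_cliqueNum (G := H) (t := insert a T₀)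
        (tc := hclq)
      have he1 : e = 1 := by rw [he, if_pos ⟨a, ha⟩]
      omega
    · have he0 : e = 0 := by rw [he, if_neg hex]
      have := SimpleGraph.IsClique.card_le_cliqueNum (G := H) (t := T₀) (tc := hT0clique)
      omega
  have hone : ∀ _ : W, 1 ≤ k := by
    intro x
    have hclq : H.IsClique (({x} : Finset W) : Set W) := by
      intro y hy z hz hyz
      simp only [coe_singleton, Set.mem_singleton_iff] at hy hz
      exact absurd (hy.trans hz.symm) hyz
    have := SimpleGraph.IsClique.card_le_cliqueNum (G := H) (t := {x}) (tc := hclq)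
    simpa using this
  -- every color is < k
  have hbound : ∀ x : W, C x < k := by
    intro x
    by_cases hx : A x
    · have he1 : e = 1 := by rw [he, if_pos ⟨x, hx⟩]
      have := hone x
      simp only [hC, if_pos hx]
      omega
    · have := hclique x hx
      simp only [hC, if_neg hx]
      omega
  -- the coloring is proper
  have hproper : ∀ {x y : W}, H.Adj x y → C x ≠ C y := by
    intro x y hxy
    obtain ⟨hne, hcases⟩ := (hadj x y).mp hxy
    by_cases hx : A x
    · have hy : ¬ A y := fun hy => hne (hA x y hx hy)
      have he1 : e = 1 := by rw [he, if_pos ⟨x, hx⟩]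
      simp only [hC, if_pos hx, if_neg hy]
      omega
    · by_cases hy : A y
      · have he1 : e = 1 := by rw [he, if_pos ⟨y, hy⟩]
        simp only [hC, if_neg hx, if_pos hy]
        omega
      · have hcc : c x = c y := by
          rcases hcases with h | h | h
          · exact absurd h hx
          · exact absurd h hy
          · exact h
        -- ranks differ for distinct vertices in the same class
        have key : ∀ u v : W, ¬ A u → ¬ A v → c u = c v → u < v → rank u < rank v := by
          intro u v hu hv huv hlt
          have hsub : insert u (univ.filter fun y => ¬ A y ∧ c y = c u ∧ y < u) ⊆
              (univ.filter fun y => ¬ A y ∧ c y = c v ∧ y < v) := by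
            intro z hz
            simp only [mem_insert, mem_filter, mem_univ, true_and] at hz ⊢
            rcases hz with rfl | ⟨h1, h2, h3⟩
            · exact ⟨hu, huv, hlt⟩
            · exact ⟨h1, h2.trans huv, h3.trans hlt⟩
          have hcard := card_le_card hsub
          rw [card_insert_of_notMem (by simp)] at hcard
          simp only [hrank]
          omega
        rcases lt_or_gt_of_ne hne with hlt | hlt
        · have := key x y hx hy hcc hlt
          simp only [hC, if_neg hx, if_neg hy]
          omega
        · have := key y x hy hx hcc.symm hlt
          simp only [hC, if_neg hx, if_neg hy]
          omega
  have hcol : H.Colorable k :=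
    ⟨SimpleGraph.Coloring.mk (fun x => (⟨C x, hbound x⟩ : Fin k))
      (fun hxy => by simpa [Fin.ext_iff] using hproper hxy)⟩
  refine le_antisymm hcol.chromaticNumber_le ?_
  obtain ⟨t, ht⟩ := H.exists_isNClique_cliqueNum
  have hle := SimpleGraph.IsClique.card_le_chromaticNumber (G := H) ht.1
  rw [ht.2] at hle
  exact hle

theorem enhanced_A5_isPerfect :
    (∀ p : ℕ, p.Prime → p ∣ Fintype.card (alternatingGroup (Fin 5)) →
      ∃ P Q : Sylow p (alternatingGroup (Fin 5)), P ≠ Q) ∧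
    (enhancedPowerGraph (alternatingGroup (Fin 5))).IsPerfect := by
  have hcard : Fintype.card (alternatingGroup (Fin 5)) = 60 := by
    have h2 : 2 * Fintype.card (alternatingGroup (Fin 5)) = 120 := by
      rw [two_mul_card_alternatingGroup, Fintype.card_perm]
      simp [Nat.factorial]
    omega
  constructor
  · intro p hp hdvd
    haveI : Fact p.Prime := ⟨hp⟩
    by_contra h
    push_neg at h
    obtain ⟨P⟩ : Nonempty (Sylow p (alternatingGroup (Fin 5))) := inferInstance
    have hPnormal : (P : Subgroup (alternatingGroup (Fin 5))).Normal := by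
      rw [← Subgroup.normalizer_eq_top_iff, Subgroup.eq_top_iff']
      intro g
      exact Sylow.smul_eq_iff_mem_normalizer.mp (h _ _)
    have hNcard : Nat.card (alternatingGroup (Fin 5)) = 60 := by
      rw [Nat.card_eq_fintype_card, hcard]
    rcases IsSimpleGroup.eq_bot_or_eq_top_of_normal _ hPnormal with hbot | htop
    · exact P.ne_bot_of_dvd_card (by rw [hNcard]; rw [hcard] at hdvd; exact hdvd) hbot
    · have hpg : IsPGroup p (⊤ : Subgroup (alternatingGroup (Fin 5))) := htop ▸ P.2
      obtain ⟨n, hn⟩ := IsPGroup.iff_card.mp hpg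
      rw [Subgroup.card_top, hNcard] at hn
      have h2 : (2 : ℕ) ∣ p ^ n := by rw [← hn]; norm_num
      have h3 : (3 : ℕ) ∣ p ^ n := by rw [← hn]; norm_num
      have h2p : 2 = p :=
        (Nat.prime_dvd_prime_iff_eq Nat.prime_two hp).mp (Nat.prime_two.dvd_of_dvd_pow h2)
      have h3p : 3 = p :=
        (Nat.prime_dvd_prime_iff_eq Nat.prime_three hp).mp (Nat.prime_three.dvd_of_dvd_pow h3)
      omega
  · intro s
    letI : Fintype s := Fintype.ofFinite s
    apply perfect_aux _ (fun x : s => (x : alternatingGroup (Fin 5)) = 1)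
      (fun x : s => Subgroup.zpowers (x : alternatingGroup (Fin 5)))
    · exact fun x y hx hy => Subtype.ext (hx.trans hy.symm)
    · intro x y
      constructor
      · intro h
        obtain ⟨hne, hrest⟩ := (A5_adj_iff _ _).mp h
        exact ⟨fun e => hne (congrArg _ e), hrest⟩
      · rintro ⟨hne, hrest⟩
        exact (A5_adj_iff _ _).mpr ⟨fun e => hne (Subtype.ext e), hrest⟩
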